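/- Let λ > 0 and μ be real numbers, and let φ(η) = λ/(π((η − μ)² + λ²)) be the Cauchy distribution density. Then φ satisfies φ·φ'' − 2(φ')² + (2π/λ)·φ³ = 0 for all η ∈ ℝ. -/

import Mathlib

lemma cauchy_q_pos (lam μ η : ℝ) (hlam : 0 < lam) :
    0 < (η - μ) ^ 2 + lam ^ 2 := by positivity

lemma cauchy_hasDerivAt (lam μ η : ℝ) (hlam : 0 < lam) :
    HasDerivAt (fun η => lam / (Real.pi * ((η - μ) ^ 2 + lam ^ 2)))
      (-(2 * lam * (η - μ)) / (Real.pi * ((η - μ) ^ 2 + lam ^ 2) ^ 2)) η := by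
  have hq := cauchy_q_pos lam μ η hlam
  have hd : HasDerivAt (fun η => Real.pi * ((η - μ) ^ 2 + lam ^ 2))
      (Real.pi * (2 * (η - μ))) η := by
    have h1 : HasDerivAt (fun η : ℝ => (η - μ) ^ 2 + lam ^ 2) (2 * (η - μ)) η := by
      have : HasDerivAt (fun η : ℝ => η - μ) 1 η := (hasDerivAt_id η).sub_const μ
      simpa using (this.pow 2).add_const (lam ^ 2)
    simpa using h1.const_mul Real.pi
  have hne : Real.pi * ((η - μ) ^ 2 + lam ^ 2) ≠ 0 := by positivity
  have : HasDerivAt (fun η => lam / (Real.pi * ((η - μ) ^ 2 + lam ^ 2))) _ η :=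
    (hasDerivAt_const η lam).div hd hne
  convert this using 1
  have hpi := Real.pi_ne_zero
  field_simp
  ring

lemma cauchy_deriv2 (lam μ η : ℝ) (hlam : 0 < lam) :
    HasDerivAt (fun η => -(2 * lam * (η - μ)) / (Real.pi * ((η - μ) ^ 2 + lam ^ 2) ^ 2))
      ((8 * lam * (η - μ) ^ 2 - 2 * lam * ((η - μ) ^ 2 + lam ^ 2))
        / (Real.pi * ((η - μ) ^ 2 + lam ^ 2) ^ 3)) η := by
  have hq := cauchy_q_pos lam μ η hlam
  have hu : HasDerivAt (fun η : ℝ => -(2 * lam * (η - μ))) (-(2 * lam)) η := by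
    have : HasDerivAt (fun η : ℝ => η - μ) 1 η := (hasDerivAt_id η).sub_const μ
    have h2 : HasDerivAt (fun η : ℝ => -(2 * lam * (η - μ))) _ η := (this.const_mul (2 * lam)).neg
    simpa using h2
  have hv : HasDerivAt (fun η => Real.pi * ((η - μ) ^ 2 + lam ^ 2) ^ 2)
      (Real.pi * (2 * ((η - μ) ^ 2 + lam ^ 2) * (2 * (η - μ)))) η := by
    have h1 : HasDerivAt (fun η : ℝ => (η - μ) ^ 2 + lam ^ 2) (2 * (η - μ)) η := by
      have : HasDerivAt (fun η : ℝ => η - μ) 1 η := (hasDerivAt_id η).sub_const μ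
      simpa using (this.pow 2).add_const (lam ^ 2)
    have : HasDerivAt (fun η => Real.pi * ((η - μ) ^ 2 + lam ^ 2) ^ 2) _ η :=
      (h1.pow 2).const_mul Real.pi
    convert this using 1
    norm_num
  have hne : Real.pi * ((η - μ) ^ 2 + lam ^ 2) ^ 2 ≠ 0 := by positivity
  have : HasDerivAt (fun η => -(2 * lam * (η - μ)) / (Real.pi * ((η - μ) ^ 2 + lam ^ 2) ^ 2)) _ η :=
    hu.div hv hne
  convert this using 1
  have hpi := Real.pi_ne_zero
  field_simp
  ring

/-- the Cauchy density solves `φφ'' − 2(φ')² + (2π/λ)φ³ = 0`. -/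
theorem stmt_7 (lam μ : ℝ) (hlam : 0 < lam) :
    ∀ η : ℝ,
      (fun η => lam / (Real.pi * ((η - μ) ^ 2 + lam ^ 2))) η
          * deriv (deriv (fun η => lam / (Real.pi * ((η - μ) ^ 2 + lam ^ 2)))) η
        - 2 * (deriv (fun η => lam / (Real.pi * ((η - μ) ^ 2 + lam ^ 2))) η) ^ 2
        + (2 * Real.pi / lam)
            * ((fun η => lam / (Real.pi * ((η - μ) ^ 2 + lam ^ 2))) η) ^ 3 = 0 := by
  intro η
  have hd1 : deriv (fun η => lam / (Real.pi * ((η - μ) ^ 2 + lam ^ 2)))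
      = fun η => -(2 * lam * (η - μ)) / (Real.pi * ((η - μ) ^ 2 + lam ^ 2) ^ 2) := by
    funext x
    exact (cauchy_hasDerivAt lam μ x hlam).deriv
  rw [hd1]
  rw [(cauchy_deriv2 lam μ η hlam).deriv]
  have hq := cauchy_q_pos lam μ η hlam
  have hpi := Real.pi_pos
  have hq' : (η - μ) ^ 2 + lam ^ 2 ≠ 0 := ne_of_gt hq
  field_simp
  ring
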